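/- With the same setup (T strongly slide-free minimal, T' reduced minimal, same elliptic subgroups, f the equivariant linear map): if e_1, e_2, e_3 are three consecutive edges of T (e_1, e_2 share a vertex v_1, and e_2, e_3 share a different vertex v_2), then f(e_1) ∩ f(e_2) ∩ f(e_3) = ∅. -/

import Mathlib

open SimpleGraph

section GTree

variable (G : Type*) [Group G]

/-- The group action preserves adjacency: `G` acts on the graph by automorphisms. -/
def ActsOnGraph {V : Type*} [MulAction G V] (T : SimpleGraph V) : Prop :=
  ∀ (g : G) (u v : V), T.Adj u v → T.Adj (g • u) (g • v)

/-- The action is without inversions: no element exchanges the two endpoints of an edge. -/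
def NoInversions {V : Type*} [MulAction G V] (T : SimpleGraph V) : Prop :=
  ∀ (g : G) (u v : V), T.Adj u v → ¬(g • u = v ∧ g • v = u)

/-- A subgroup is elliptic if it fixes a vertex. -/
def IsElliptic (V : Type*) [MulAction G V] (H : Subgroup G) : Prop :=
  ∃ v : V, ∀ h ∈ H, h • v = v

/-- The stabilizer of the edge with endpoints `u`, `v` (for an action without
inversions this is the pointwise stabilizer of the edge). -/
def edgeStab {V : Type*} [MulAction G V] (u v : V) : Subgroup G :=
  MulAction.stabilizer G u ⊓ MulAction.stabilizer G v

/-- The set of vertices on the unique path between two vertices of a tree. -/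
noncomputable def seg {V : Type*} {T : SimpleGraph V} (hT : T.IsTree) (x y : V) : Set V :=
  {z | z ∈ ((hT.existsUnique_path x y).exists.choose).support}

/-- A set of vertices is a subtree if it contains the arc between any two of its points. -/
def IsSubtree {V : Type*} {T : SimpleGraph V} (hT : T.IsTree) (S : Set V) : Prop :=
  ∀ x ∈ S, ∀ y ∈ S, seg hT x y ⊆ S

/-- A set of vertices is invariant under the group action. -/
def GInvariant {V : Type*} [MulAction G V] (S : Set V) : Prop :=
  ∀ (g : G), ∀ v ∈ S, g • v ∈ S

/-- The action is minimal: there is no proper nonempty invariant subtree. -/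
def MinimalAction {V : Type*} [MulAction G V] {T : SimpleGraph V} (hT : T.IsTree) : Prop :=
  ∀ S : Set V, S.Nonempty → GInvariant G S → IsSubtree hT S → S = Set.univ

/-- Strongly slide-free: if two edges at a common vertex `v` have nested
stabilizers, they are in the same `G_v`-orbit. -/
def StronglySlideFree {V : Type*} [MulAction G V] (T : SimpleGraph V) : Prop :=
  ∀ v a b : V, T.Adj v a → T.Adj v b → edgeStab G v a ≤ edgeStab G v b →
    ∃ g ∈ MulAction.stabilizer G v, g • a = b

/-- Reduced: for every edge whose stabilizer equals the stabilizer of one of its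
endpoints, the two endpoints are in the same `G`-orbit. -/
def Reduced {V : Type*} [MulAction G V] (T : SimpleGraph V) : Prop :=
  ∀ u v : V, T.Adj u v → edgeStab G u v = MulAction.stabilizer G v → ∃ g : G, g • u = v

end GTree

section TreeAux

open SimpleGraph

variable {V : Type*} {T : SimpleGraph V}

/-- The chosen path between two vertices of a tree (same choice as in `seg`). -/
noncomputable def thePath (hT : T.IsTree) (x y : V) : T.Walk x y :=
  (hT.existsUnique_path x y).exists.choose

lemma thePath_isPath (hT : T.IsTree) (x y : V) : (thePath hT x y).IsPath :=
  (hT.existsUnique_path x y).exists.choose_spec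

lemma thePath_unique (hT : T.IsTree) {x y : V} {p : T.Walk x y} (hp : p.IsPath) :
    p = thePath hT x y :=
  (hT.existsUnique_path x y).unique hp (thePath_isPath hT x y)

lemma mem_seg (hT : T.IsTree) {x y z : V} :
    z ∈ seg hT x y ↔ z ∈ (thePath hT x y).support := Iff.rfl

lemma thePath_symm (hT : T.IsTree) (x y : V) :
    thePath hT y x = (thePath hT x y).reverse :=
  (thePath_unique hT ((thePath_isPath hT x y).reverse)).symm

lemma seg_symm (hT : T.IsTree) {x y z : V} (h : z ∈ seg hT x y) : z ∈ seg hT y x := by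
  rw [mem_seg, thePath_symm, Walk.support_reverse, List.mem_reverse]
  exact h

lemma getVert_length_takeUntil {u v z : V} [DecidableEq V] (p : T.Walk u v) (hz : z ∈ p.support) :
    p.getVert ((p.takeUntil z hz).length) = z := by
  have h := Walk.take_spec p hz
  calc p.getVert (p.takeUntil z hz).length
      = ((p.takeUntil z hz).append (p.dropUntil z hz)).getVert (p.takeUntil z hz).length := by
        rw [h]
    _ = z := by rw [Walk.getVert_append]; simp

lemma length_thePath_takeUntil [DecidableEq V] (hT : T.IsTree) {x y z : V}
    (hz : z ∈ (thePath hT x y).support) :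
    (thePath hT x z).length = ((thePath hT x y).takeUntil z hz).length := by
  rw [← thePath_unique hT ((thePath_isPath hT x y).takeUntil hz)]

lemma getVert_thePath [DecidableEq V] (hT : T.IsTree) {x y z : V}
    (hz : z ∈ (thePath hT x y).support) :
    (thePath hT x y).getVert (thePath hT x z).length = z := by
  rw [length_thePath_takeUntil hT hz]
  exact getVert_length_takeUntil _ hz

lemma eq_of_length_thePath_eq (hT : T.IsTree) {x y z₁ z₂ : V}
    (h₁ : z₁ ∈ seg hT x y) (h₂ : z₂ ∈ seg hT x y)
    (hl : (thePath hT x z₁).length = (thePath hT x z₂).length) : z₁ = z₂ := by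
  classical
  have e₁ := getVert_thePath hT ((mem_seg hT).mp h₁)
  have e₂ := getVert_thePath hT ((mem_seg hT).mp h₂)
  rw [hl] at e₁
  exact e₁.symm.trans e₂

section Act

variable {G : Type*} [Group G] [MulAction G V]

/-- The graph homomorphism given by the action of `g`. -/
def actHom (hact : ActsOnGraph G T) (g : G) : T →g T :=
  ⟨fun v => g • v, fun h => hact g _ _ h⟩

lemma thePath_smul (hT : T.IsTree) (hact : ActsOnGraph G T) (g : G) (x y : V) :
    thePath hT (g • x) (g • y) = (thePath hT x y).map (actHom hact g) := by
  refine (thePath_unique hT ?_).symm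
  exact Walk.map_isPath_of_injective (f := actHom hact g)
    (MulAction.injective g) (thePath_isPath hT x y)

lemma smul_mem_seg (hT : T.IsTree) (hact : ActsOnGraph G T) {g : G} {x y z : V}
    (h : z ∈ seg hT x y) : g • z ∈ seg hT (g • x) (g • y) := by
  rw [mem_seg, thePath_smul hT hact g]
  have hs := Walk.support_map (actHom hact g) (thePath hT x y)
  exact cast (congrArg (g • z ∈ ·) hs.symm) (List.mem_map.mpr ⟨z, h, rfl⟩)

lemma length_thePath_smul (hT : T.IsTree) (hact : ActsOnGraph G T) (g : G) (x y : V) :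
    (thePath hT (g • x) (g • y)).length = (thePath hT x y).length := by
  rw [thePath_smul hT hact g]
  exact Walk.length_map _ _

lemma fix_of_mem_seg (hT : T.IsTree) (hact : ActsOnGraph G T) {γ : G} {a b c z : V}
    (hγa : γ • a = a) (hγb : γ • b = c)
    (h₁ : z ∈ seg hT a b) (h₂ : z ∈ seg hT a c) : γ • z = z := by
  have hmem : γ • z ∈ seg hT a c := by
    have := smul_mem_seg hT hact (g := γ) h₁
    rwa [hγa, hγb] at this
  have hlen : (thePath hT a (γ • z)).length = (thePath hT a z).length := by
    have := length_thePath_smul hT hact γ a z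
    rwa [hγa] at this
  exact eq_of_length_thePath_eq hT hmem h₂ hlen

end Act

lemma dist_adj (hT : T.IsTree) {a b : V} (hadj : T.Adj a b) (u : V) :
    (thePath hT u b).length = (thePath hT u a).length + 1 ∨
    (thePath hT u a).length = (thePath hT u b).length + 1 := by
  classical
  by_cases hb : b ∈ (thePath hT u a).support
  · right
    have hdrop : (thePath hT u a).dropUntil b hb = thePath hT b a :=
      thePath_unique hT ((thePath_isPath hT u a).dropUntil hb)
    have hedge : (Walk.cons hadj.symm Walk.nil : T.Walk b a) = thePath hT b a :=
      thePath_unique hT (by simp [Walk.cons_isPath_iff, hadj.ne'])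
    have hl := congrArg Walk.length (Walk.take_spec (thePath hT u a) hb)
    rw [Walk.length_append] at hl
    have h4 : ((thePath hT u a).takeUntil b hb).length = (thePath hT u b).length :=
      (length_thePath_takeUntil hT hb).symm
    have h5 : ((thePath hT u a).dropUntil b hb).length = 1 := by
      rw [hdrop, ← hedge]
      rfl
    omega
  · left
    have hconc : ((thePath hT u a).concat hadj).IsPath := by
      rw [← Walk.isPath_reverse_iff, Walk.reverse_concat, Walk.cons_isPath_iff]
      refine ⟨(thePath_isPath hT u a).reverse, ?_⟩
      rwa [Walk.support_reverse, List.mem_reverse]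
    have hl := congrArg Walk.length (thePath_unique hT hconc)
    rw [Walk.length_concat] at hl
    omega

lemma not_double_descent (hT : T.IsTree) {u a b c : V} (hab : a ≠ b)
    (hac : T.Adj a c) (hbc : T.Adj b c)
    (ha : (thePath hT u a).length + 1 = (thePath hT u c).length)
    (hb : (thePath hT u b).length + 1 = (thePath hT u c).length) : False := by
  classical
  have key : ∀ (d : V), T.Adj d c → (thePath hT u d).length + 1 = (thePath hT u c).length →
      (thePath hT u c).getVert ((thePath hT u d).length) = d := by
    intro d hdc hlen
    have hcd : c ∉ (thePath hT u d).support := by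
      intro hc
      have h1 : (thePath hT u c).length ≤ (thePath hT u d).length := by
        rw [length_thePath_takeUntil hT hc]
        exact Walk.length_takeUntil_le _ hc
      omega
    have hpath : ((thePath hT u d).concat hdc).IsPath := by
      rw [← Walk.isPath_reverse_iff, Walk.reverse_concat, Walk.cons_isPath_iff]
      refine ⟨(thePath_isPath hT u d).reverse, ?_⟩
      rwa [Walk.support_reverse, List.mem_reverse]
    have heq := thePath_unique hT hpath
    rw [← heq, Walk.concat_eq_append, Walk.getVert_append]
    simp
  have k1 := key a hac ha
  have k2 := key b hbc hb
  have hlab : (thePath hT u a).length = (thePath hT u b).length := by omega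
  rw [hlab] at k1
  exact hab (k1.symm.trans k2)

lemma no_fixed (hT : T.IsTree) {w v₁ v₂ x r : V}
    (h1 : T.Adj w v₁) (h2 : T.Adj v₁ v₂) (h3 : T.Adj v₂ x)
    (hwv : w ≠ v₂) (hxv : x ≠ v₁)
    (e1 : (thePath hT r v₂).length = (thePath hT r w).length)
    (e2 : (thePath hT r x).length = (thePath hT r v₁).length) : False := by
  rcases dist_adj hT h1 r with h | h
  · exact not_double_descent hT (u := r) hwv h1 h2.symm (by omega) (by omega)
  · exact not_double_descent hT (u := r) (Ne.symm hxv) h2 h3.symm (by omega) (by omega)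

end TreeAux

/-- Lemma 2: the images under `f` of three consecutive edges of `T` have empty
common intersection. -/
theorem image_three_consecutive_edges {G V V' : Type*} [Group G] [MulAction G V] [MulAction G V']
    {T : SimpleGraph V} {T' : SimpleGraph V'} (hT : T.IsTree) (hT' : T'.IsTree)
    (hact : ActsOnGraph G T) (hact' : ActsOnGraph G T')
    (hni : NoInversions G T) (hni' : NoInversions G T')
    (hmin : MinimalAction G hT) (hmin' : MinimalAction G hT')
    (hell : ∀ H : Subgroup G, IsElliptic G V H ↔ IsElliptic G V' H)
    (hssf : StronglySlideFree G T) (hred' : Reduced G T')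
    (f : V → V')
    (hequi : ∀ (g : G) (v : V), f (g • v) = g • f v)
    (hfixf : ∀ v : V, ∀ g ∈ MulAction.stabilizer G v, g • f v = f v)
    (hinj : Function.Injective f)
    (w v₁ v₂ x : V) (h1 : T.Adj w v₁) (h2 : T.Adj v₁ v₂) (h3 : T.Adj v₂ x)
    (hwv : w ≠ v₂) (hxv : x ≠ v₁) :
    seg hT' (f w) (f v₁) ∩ seg hT' (f v₁) (f v₂) ∩ seg hT' (f v₂) (f x) = ∅ := by
  classical
  rw [Set.eq_empty_iff_forall_notMem]
  rintro p ⟨⟨hp1, hp2⟩, hp3⟩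
  -- stabilizers of vertices of `T` fix the corresponding vertices of `T'`
  have hstab : ∀ (g : G) (v : V), g • v = v → g • f v = f v := fun g v hg =>
    hfixf v g (MulAction.mem_stabilizer_iff.mpr hg)
  -- the three edge stabilizers fix `p`
  have hH₁ : ∀ g : G, g • w = w → g • v₁ = v₁ → g • p = p := fun g hgw hgv =>
    fix_of_mem_seg hT' hact' (hstab g v₁ hgv) (hstab g w hgw)
      (seg_symm hT' hp1) (seg_symm hT' hp1)
  have hH₂ : ∀ g : G, g • v₁ = v₁ → g • v₂ = v₂ → g • p = p := fun g hgv hgv' =>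
    fix_of_mem_seg hT' hact' (hstab g v₁ hgv) (hstab g v₂ hgv') hp2 hp2
  have hH₃ : ∀ g : G, g • v₂ = v₂ → g • x = x → g • p = p := fun g hgv hgx =>
    fix_of_mem_seg hT' hact' (hstab g v₂ hgv) (hstab g x hgx) hp3 hp3
  -- the stabilizer of `p` is elliptic in `V'`, hence elliptic in `V`: it fixes some `q`
  obtain ⟨q, hq⟩ : IsElliptic G V (MulAction.stabilizer G p) :=
    (hell _).mpr ⟨p, fun h hh => MulAction.mem_stabilizer_iff.mp hh⟩
  have hq' : ∀ g : G, g • p = p → g • q = q := fun g hg =>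
    hq g (MulAction.mem_stabilizer_iff.mpr hg)
  -- producing the sliding elements via strong slide-freeness
  have mkγ₁ : ∀ u : V, T.Adj v₁ u →
      (∀ g : G, g • v₁ = v₁ → g • w = w → g • u = u) →
      (∀ g : G, g • v₁ = v₁ → g • v₂ = v₂ → g • u = u) →
      ∃ γ : G, γ • v₁ = v₁ ∧ γ • w = v₂ := by
    intro u hadj hc1 hc2
    obtain ⟨g₁, hg₁s, hg₁⟩ := hssf v₁ w u h1.symm hadj (by
      intro g hg
      simp only [edgeStab, Subgroup.mem_inf, MulAction.mem_stabilizer_iff] at hg ⊢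
      exact ⟨hg.1, hc1 g hg.1 hg.2⟩)
    obtain ⟨g₂, hg₂s, hg₂⟩ := hssf v₁ v₂ u h2 hadj (by
      intro g hg
      simp only [edgeStab, Subgroup.mem_inf, MulAction.mem_stabilizer_iff] at hg ⊢
      exact ⟨hg.1, hc2 g hg.1 hg.2⟩)
    rw [MulAction.mem_stabilizer_iff] at hg₁s hg₂s
    refine ⟨g₂⁻¹ * g₁, ?_, ?_⟩
    · rw [mul_smul, hg₁s, inv_smul_eq_iff, hg₂s]
    · rw [mul_smul, hg₁, inv_smul_eq_iff, hg₂]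
  have mkγ₂ : ∀ u : V, T.Adj v₂ u →
      (∀ g : G, g • v₂ = v₂ → g • v₁ = v₁ → g • u = u) →
      (∀ g : G, g • v₂ = v₂ → g • x = x → g • u = u) →
      ∃ γ : G, γ • v₂ = v₂ ∧ γ • v₁ = x := by
    intro u hadj hc1 hc2
    obtain ⟨g₁, hg₁s, hg₁⟩ := hssf v₂ v₁ u h2.symm hadj (by
      intro g hg
      simp only [edgeStab, Subgroup.mem_inf, MulAction.mem_stabilizer_iff] at hg ⊢
      exact ⟨hg.1, hc1 g hg.1 hg.2⟩)
    obtain ⟨g₂, hg₂s, hg₂⟩ := hssf v₂ x u h3 hadj (by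
      intro g hg
      simp only [edgeStab, Subgroup.mem_inf, MulAction.mem_stabilizer_iff] at hg ⊢
      exact ⟨hg.1, hc2 g hg.1 hg.2⟩)
    rw [MulAction.mem_stabilizer_iff] at hg₁s hg₂s
    refine ⟨g₂⁻¹ * g₁, ?_, ?_⟩
    · rw [mul_smul, hg₁s, inv_smul_eq_iff, hg₂s]
    · rw [mul_smul, hg₁, inv_smul_eq_iff, hg₂]
  by_cases hq1 : q = v₁
  · subst hq1
    obtain ⟨γ, hγv, hγ⟩ := mkγ₂ q h2.symm (fun _ _ h => h)
      (fun g hv hx => hq' g (hH₃ g hv hx))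
    have hγp : γ • p = p :=
      fix_of_mem_seg hT' hact' (hstab γ v₂ hγv) (by rw [← hequi, hγ])
        (seg_symm hT' hp2) hp3
    exact hxv (hγ.symm.trans (hq' γ hγp))
  by_cases hq2 : q = v₂
  · subst hq2
    obtain ⟨γ, hγv, hγ⟩ := mkγ₁ q h2 (fun g hv hw => hq' g (hH₁ g hw hv))
      (fun _ _ h => h)
    have hγp : γ • p = p :=
      fix_of_mem_seg hT' hact' (hstab γ v₁ hγv) (by rw [← hequi, hγ])
        (seg_symm hT' hp1) hp2
    exact hwv (MulAction.injective γ (hγ.trans (hq' γ hγp).symm))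
  -- main case: `q` differs from both `v₁` and `v₂`
  have mku : ∀ v : V, v ≠ q →
      ∃ u : V, T.Adj v u ∧ ∀ g : G, g • v = v → g • q = q → g • u = u := by
    intro v hvq
    have hlen : (thePath hT v q).length ≠ 0 := fun h =>
      hvq (SimpleGraph.Walk.eq_of_length_eq_zero h)
    refine ⟨(thePath hT v q).getVert 1, ?_, ?_⟩
    · have := SimpleGraph.Walk.adj_getVert_succ (thePath hT v q) (i := 0) (by omega)
      simpa [SimpleGraph.Walk.getVert_zero] using this
    · intro g hgv hgq
      have hmem : (thePath hT v q).getVert 1 ∈ seg hT v q :=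
        (mem_seg hT).mpr
          (SimpleGraph.Walk.mem_support_iff_exists_getVert.mpr ⟨1, rfl, by omega⟩)
      exact fix_of_mem_seg hT hact hgv hgq hmem hmem
  obtain ⟨u₁, hu₁adj, hu₁⟩ := mku v₁ (fun h => hq1 h.symm)
  obtain ⟨γ₁, hγ₁v, hγ₁⟩ := mkγ₁ u₁ hu₁adj
    (fun g hv hw => hu₁ g hv (hq' g (hH₁ g hw hv)))
    (fun g hv hv' => hu₁ g hv (hq' g (hH₂ g hv hv')))
  obtain ⟨u₂, hu₂adj, hu₂⟩ := mku v₂ (fun h => hq2 h.symm)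
  obtain ⟨γ₂, hγ₂v, hγ₂⟩ := mkγ₂ u₂ hu₂adj
    (fun g hv hv' => hu₂ g hv (hq' g (hH₂ g hv' hv)))
    (fun g hv hx => hu₂ g hv (hq' g (hH₃ g hv hx)))
  have hγ₁p : γ₁ • p = p :=
    fix_of_mem_seg hT' hact' (hstab γ₁ v₁ hγ₁v) (by rw [← hequi, hγ₁])
      (seg_symm hT' hp1) hp2
  have hγ₂p : γ₂ • p = p :=
    fix_of_mem_seg hT' hact' (hstab γ₂ v₂ hγ₂v) (by rw [← hequi, hγ₂])
      (seg_symm hT' hp2) hp3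
  have hhp : (γ₂ * γ₁) • p = p := by rw [mul_smul, hγ₁p, hγ₂p]
  obtain ⟨r, hr⟩ : IsElliptic G V (Subgroup.zpowers (γ₂ * γ₁)) :=
    (hell _).mpr ⟨p, fun g hg =>
      MulAction.mem_stabilizer_iff.mp
        (Subgroup.zpowers_le.mpr (MulAction.mem_stabilizer_iff.mpr hhp) hg)⟩
  have hrfix : (γ₂ * γ₁) • r = r := hr _ (Subgroup.mem_zpowers _)
  have hhw : (γ₂ * γ₁) • w = v₂ := by rw [mul_smul, hγ₁, hγ₂v]
  have hhv : (γ₂ * γ₁) • v₁ = x := by rw [mul_smul, hγ₁v, hγ₂]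
  have e1 : (thePath hT r v₂).length = (thePath hT r w).length := by
    conv_lhs => rw [← hrfix, ← hhw]
    exact length_thePath_smul hT hact (γ₂ * γ₁) r w
  have e2 : (thePath hT r x).length = (thePath hT r v₁).length := by
    conv_lhs => rw [← hrfix, ← hhv]
    exact length_thePath_smul hT hact (γ₂ * γ₁) r v₁
  exact no_fixed hT h1 h2 h3 hwv hxv e1 e2
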